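/- Let ζ = exp(πi/19) ∈ ℂ. Then [12]_ζ [13]_ζ [14]_ζ [15]_ζ [18]_ζ [21]_ζ = −[1]_ζ [2]_ζ [4]_ζ [5]_ζ [6]_ζ [7]_ζ; equivalently, the quantum dimension of the representation V(2Λ_1) of the simple Lie algebra of type E₇ at ζ, namely ([12]_ζ [13]_ζ [14]_ζ [15]_ζ [18]_ζ [21]_ζ)/([1]_ζ [2]_ζ [4]_ζ [5]_ζ [6]_ζ [7]_ζ), equals −1. -/

import Mathlib

open Complex

/-- `ζ = exp(πi/m)`, a primitive `2m`-th root of unity. -/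
noncomputable def zeta (m : ℕ) : ℂ := Complex.exp (Real.pi * Complex.I / m)

/-- The `ζ`-integer `[n]_ζ = (ζ^n - ζ^{-n})/(ζ - ζ⁻¹)` for `ζ = exp(πi/m)`. -/
noncomputable def qint (m : ℕ) (n : ℤ) : ℂ :=
  (zeta m ^ n - zeta m ^ (-n)) / (zeta m - (zeta m)⁻¹)

lemma zeta19_ne_zero : zeta 19 ≠ 0 := Complex.exp_ne_zero _

lemma zeta19_pow19 : zeta 19 ^ (19 : ℤ) = -1 := by
  unfold zeta
  rw [← Complex.exp_int_mul]
  have h : (19 : ℤ) * ((Real.pi : ℂ) * Complex.I / ((19 : ℕ) : ℂ)) =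
      (Real.pi : ℂ) * Complex.I := by
    have : ((19 : ℕ) : ℂ) ≠ 0 := by norm_num
    field_simp
    norm_num
  rw [h, Complex.exp_pi_mul_I]

lemma zeta19_prim : IsPrimitiveRoot (zeta 19) 38 := by
  have h := Complex.isPrimitiveRoot_exp 38 (by norm_num)
  have he : Complex.exp (2 * Real.pi * Complex.I / (38 : ℕ)) = zeta 19 := by
    unfold zeta
    congr 1
    have : ((38 : ℕ) : ℂ) ≠ 0 := by norm_num
    have : ((19 : ℕ) : ℂ) ≠ 0 := by norm_num
    push_cast
    ring
  rwa [he] at h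

lemma num_ne (n : ℕ) (h1 : 0 < 2 * n) (h2 : 2 * n < 38) :
    zeta 19 ^ (n : ℤ) - zeta 19 ^ (-(n : ℤ)) ≠ 0 := by
  intro h
  have hz := zeta19_ne_zero
  have hpow : zeta 19 ^ (2 * n) = 1 := by
    have h' : zeta 19 ^ (n : ℤ) = zeta 19 ^ (-(n : ℤ)) := sub_eq_zero.mp h
    have : zeta 19 ^ ((n : ℤ) + (n : ℤ)) = 1 := by
      rw [zpow_add₀ hz]
      nth_rewrite 2 [h']
      rw [← zpow_add₀ hz]
      simp
    have h2n : ((2 * n : ℕ) : ℤ) = (n : ℤ) + (n : ℤ) := by push_cast; ring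
    rw [← h2n, zpow_natCast] at this
    exact this
  exact zeta19_prim.pow_ne_one_of_pos_of_lt h1.ne' h2 hpow

lemma qint_flip (a b : ℤ) (h : a + b = 19) : qint 19 a = qint 19 b := by
  unfold qint
  congr 1
  have hz := zeta19_ne_zero
  have ha : zeta 19 ^ a = -(zeta 19 ^ (-b)) := by
    have h' : a = 19 + (-b) := by omega
    rw [h', zpow_add₀ hz, zeta19_pow19]; ring
  have ha' : zeta 19 ^ (-a) = -(zeta 19 ^ b) := by
    have h' : -a = (-19) + b := by omega
    rw [h', zpow_add₀ hz, zpow_neg, zeta19_pow19]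
    norm_num
  rw [ha, ha']; ring

lemma qint_shift : qint 19 21 = -qint 19 2 := by
  unfold qint
  have hz := zeta19_ne_zero
  have ha : zeta 19 ^ (21 : ℤ) = -(zeta 19 ^ (2 : ℤ)) := by
    have h' : (21 : ℤ) = 19 + 2 := by norm_num
    rw [h', zpow_add₀ hz, zeta19_pow19]; ring
  have ha' : zeta 19 ^ (-21 : ℤ) = -(zeta 19 ^ (-2 : ℤ)) := by
    have h' : (-21 : ℤ) = (-19) + (-2) := by norm_num
    rw [h', zpow_add₀ hz, zpow_neg, zeta19_pow19]
    norm_num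
  rw [ha, ha', ← neg_div]
  ring_nf

lemma den_ne : zeta 19 - (zeta 19)⁻¹ ≠ 0 := by
  have h := num_ne 1 (by norm_num) (by norm_num)
  simpa using h

lemma qint_ne (n : ℕ) (h1 : 0 < 2 * n) (h2 : 2 * n < 38) : qint 19 (n : ℤ) ≠ 0 :=
  div_ne_zero (num_ne n h1 h2) den_ne

theorem qdim_E7_twoLambda1 :
    qint 19 12 * qint 19 13 * qint 19 14 * qint 19 15 * qint 19 18 * qint 19 21 =
        -(qint 19 1 * qint 19 2 * qint 19 4 * qint 19 5 * qint 19 6 * qint 19 7) ∧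
      qint 19 12 * qint 19 13 * qint 19 14 * qint 19 15 * qint 19 18 * qint 19 21 /
        (qint 19 1 * qint 19 2 * qint 19 4 * qint 19 5 * qint 19 6 * qint 19 7) = -1 := by
  have e12 : qint 19 12 = qint 19 7 := qint_flip 12 7 (by norm_num)
  have e13 : qint 19 13 = qint 19 6 := qint_flip 13 6 (by norm_num)
  have e14 : qint 19 14 = qint 19 5 := qint_flip 14 5 (by norm_num)
  have e15 : qint 19 15 = qint 19 4 := qint_flip 15 4 (by norm_num)
  have e18 : qint 19 18 = qint 19 1 := qint_flip 18 1 (by norm_num)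
  have heq : qint 19 12 * qint 19 13 * qint 19 14 * qint 19 15 * qint 19 18 * qint 19 21 =
      -(qint 19 1 * qint 19 2 * qint 19 4 * qint 19 5 * qint 19 6 * qint 19 7) := by
    rw [e12, e13, e14, e15, e18, qint_shift]; ring
  refine ⟨heq, ?_⟩
  have hne : qint 19 1 * qint 19 2 * qint 19 4 * qint 19 5 * qint 19 6 * qint 19 7 ≠ 0 := by
    have h1 := qint_ne 1 (by norm_num) (by norm_num)
    have h2 := qint_ne 2 (by norm_num) (by norm_num)
    have h4 := qint_ne 4 (by norm_num) (by norm_num)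
    have h5 := qint_ne 5 (by norm_num) (by norm_num)
    have h6 := qint_ne 6 (by norm_num) (by norm_num)
    have h7 := qint_ne 7 (by norm_num) (by norm_num)
    norm_num at h1 h2 h4 h5 h6 h7
    exact mul_ne_zero (mul_ne_zero (mul_ne_zero (mul_ne_zero (mul_ne_zero h1 h2) h4) h5) h6) h7
  rw [heq, neg_div, div_self hne]
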